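/- Let I : (0,∞) → (0,∞) be a continuous increasing function whose left derivative I'₋ exists everywhere and satisfies I'₋(v) > (1 − 2ε)√(16π/I(v)) for all v > 0, where 0 ≤ ε < 1/2. Suppose additionally that I(v) > (1 − 2ε)^{2/3}(36π)^{1/3} v^{2/3} for all sufficiently small v > 0. Then I(v) ≥ (1 − 2ε)^{2/3}(36π)^{1/3} v^{2/3} for all v > 0. -/

import Mathlib

open Real Set Filter

/-- First-crossing lemma: a function on `(0,∞)` with positive left derivative that is
positive near `0` is nonnegative everywhere. -/
lemma pos_of_left_deriv (F F' : ℝ → ℝ)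
    (hc : ContinuousOn F (Set.Ioi 0))
    (hd : ∀ v, 0 < v → HasDerivWithinAt F (F' v) (Set.Iic v) v)
    (hd' : ∀ v, 0 < v → 0 < F' v)
    (hs : ∀ᶠ v in nhdsWithin 0 (Set.Ioi 0), 0 < F v) :
    ∀ v, 0 < v → 0 ≤ F v := by
  intro v₀ hv₀
  by_contra hneg
  push_neg at hneg
  obtain ⟨δ, hδ, hδ'⟩ := mem_nhdsGT_iff_exists_Ioo_subset.mp hs
  have hδ0 : 0 < δ := mem_Ioi.mp hδ
  set a := min (δ / 2) (v₀ / 2) with ha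
  have ha0 : 0 < a := lt_min (by linarith) (by linarith)
  have haδ : a < δ := lt_of_le_of_lt (min_le_left _ _) (by linarith)
  have hav₀ : a < v₀ := lt_of_le_of_lt (min_le_right _ _) (by linarith)
  have hFa : 0 < F a := hδ' ⟨ha0, haδ⟩
  set S := Icc a v₀ ∩ F ⁻¹' Iic 0 with hS
  have hSclosed : IsClosed S := by
    apply ContinuousOn.preimage_isClosed_of_isClosed (hc.mono ?_) isClosed_Icc isClosed_Iic
    intro x hx
    exact lt_of_lt_of_le ha0 hx.1
  have hSne : S.Nonempty := ⟨v₀, ⟨le_of_lt hav₀, le_refl _⟩, le_of_lt hneg⟩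
  have hSbdd : BddBelow S := ⟨a, fun x hx => hx.1.1⟩
  set s := sInf S with hs'
  have hsS : s ∈ S := hSclosed.csInf_mem hSne hSbdd
  have hFs : F s ≤ 0 := hsS.2
  have hsa : a < s := by
    rcases lt_or_eq_of_le hsS.1.1 with h | h
    · exact h
    · exfalso
      rw [← h] at hFs
      linarith
  have hs0 : 0 < s := ha0.trans hsa
  have hgt : ∀ v, a ≤ v → v < s → 0 < F v := by
    intro v hva hvs
    by_contra hFv
    push_neg at hFv
    have hvS : v ∈ S := ⟨⟨hva, le_trans hvs.le hsS.1.2⟩, hFv⟩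
    exact absurd (csInf_le hSbdd hvS) (not_le.mpr hvs)
  have hds := hd s hs0
  have hF's := hd' s hs0
  rw [hasDerivWithinAt_iff_tendsto_slope] at hds
  have hIic : Iic s \ {s} = Iio s := by
    ext x
    simp [lt_iff_le_and_ne]
  rw [hIic] at hds
  have h1 : ∀ᶠ v in nhdsWithin s (Iio s), 0 < slope F s v :=
    hds.eventually (eventually_gt_nhds hF's)
  have h2 : ∀ᶠ v in nhdsWithin s (Iio s), a ≤ v :=
    mem_nhdsWithin_of_mem_nhds (Ici_mem_nhds hsa)
  have h3 : ∀ᶠ v in nhdsWithin s (Iio s), v ∈ Iio s := eventually_mem_nhdsWithin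
  obtain ⟨v, ⟨hv1, hv2⟩, hv3⟩ := ((h1.and h2).and h3).exists
  have hvs : v < s := hv3
  have hnum : F v - F s < 0 := by
    have hden : v - s < 0 := by linarith
    rw [slope_def_field, div_pos_iff] at hv1
    rcases hv1 with ⟨h, h'⟩ | ⟨h, h'⟩
    · linarith
    · linarith
  have := hgt v hv2 hvs
  linarith

lemma key_eq (c : ℝ) (hc : 0 ≤ c) (v : ℝ) (hv : 0 ≤ v) :
    (c ^ ((2 : ℝ) / 3) * (36 * π) ^ ((1 : ℝ) / 3) * v ^ ((2 : ℝ) / 3)) ^ ((3 : ℝ) / 2)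
      = 6 * c * Real.sqrt π * v := by
  have hπ : (0 : ℝ) ≤ 36 * π := by positivity
  rw [Real.mul_rpow (by positivity) (by positivity),
    Real.mul_rpow (by positivity) (by positivity),
    ← Real.rpow_mul hc, ← Real.rpow_mul hπ, ← Real.rpow_mul hv,
    show (2 : ℝ) / 3 * (3 / 2) = 1 by norm_num,
    show (1 : ℝ) / 3 * (3 / 2) = 1 / 2 by norm_num,
    Real.rpow_one, Real.rpow_one]
  rw [show ((36 : ℝ) * π) ^ ((1 : ℝ) / 2) = Real.sqrt (36 * π) by
      rw [Real.sqrt_eq_rpow],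
    Real.sqrt_mul (by norm_num : (0:ℝ) ≤ 36) π,
    show Real.sqrt 36 = 6 by
      rw [show (36 : ℝ) = 6 ^ 2 by norm_num, Real.sqrt_sq (by norm_num : (0:ℝ) ≤ 6)]]
  ring

/-- ODE comparison for the isoperimetric profile: if `I` is continuous, increasing,
positive, its left derivative satisfies `I'₋(v) > (1−2ε)√(16π/I(v))` for all `v > 0`,
and `I(v) > (1−2ε)^{2/3}(36π)^{1/3}v^{2/3}` for all small `v > 0`, then
`I(v) ≥ (1−2ε)^{2/3}(36π)^{1/3}v^{2/3}` for all `v > 0`. -/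
theorem stmt7 (ε : ℝ) (hε : 0 ≤ ε) (hε' : ε < 1 / 2)
    (I I' : ℝ → ℝ)
    (hcont : ContinuousOn I (Set.Ioi 0))
    (hmono : MonotoneOn I (Set.Ioi 0))
    (hpos : ∀ v, 0 < v → 0 < I v)
    (hderiv : ∀ v, 0 < v → HasDerivWithinAt I (I' v) (Set.Iic v) v)
    (hineq : ∀ v, 0 < v → (1 - 2 * ε) * Real.sqrt (16 * π / I v) < I' v)
    (hsmall : ∀ᶠ v in nhdsWithin 0 (Set.Ioi 0),
      (1 - 2 * ε) ^ ((2 : ℝ) / 3) * (36 * π) ^ ((1 : ℝ) / 3) * v ^ ((2 : ℝ) / 3) < I v) :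
    ∀ v, 0 < v →
      (1 - 2 * ε) ^ ((2 : ℝ) / 3) * (36 * π) ^ ((1 : ℝ) / 3) * v ^ ((2 : ℝ) / 3) ≤ I v := by
  set c : ℝ := 1 - 2 * ε with hcdef
  have hc0 : 0 < c := by simp [hcdef]; linarith
  set F : ℝ → ℝ := fun v => I v ^ ((3 : ℝ) / 2) - 6 * c * Real.sqrt π * v with hF
  set F' : ℝ → ℝ := fun v => (3 : ℝ) / 2 * I v ^ ((1 : ℝ) / 2) * I' v - 6 * c * Real.sqrt π
    with hF'
  have hFd : ∀ v, 0 < v → HasDerivWithinAt F (F' v) (Set.Iic v) v := by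
    intro v hv
    have h1 : HasDerivAt (fun x : ℝ => x ^ ((3 : ℝ) / 2))
        ((3 : ℝ) / 2 * I v ^ ((3 : ℝ) / 2 - 1)) (I v) :=
      Real.hasDerivAt_rpow_const (Or.inl (ne_of_gt (hpos v hv)))
    have h2 := h1.comp_hasDerivWithinAt v (hderiv v hv)
    have h3 : HasDerivWithinAt (fun x => 6 * c * Real.sqrt π * x)
        (6 * c * Real.sqrt π) (Set.Iic v) v := by
      simpa using ((hasDerivAt_id v).const_mul (6 * c * Real.sqrt π)).hasDerivWithinAt
    have := h2.sub h3
    refine this.congr_deriv ?_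
    simp only [hF']
    norm_num
  have hF'pos : ∀ v, 0 < v → 0 < F' v := by
    intro v hv
    have hIv := hpos v hv
    have key : I v ^ ((1 : ℝ) / 2) * Real.sqrt (16 * π / I v) = 4 * Real.sqrt π := by
      rw [show I v ^ ((1 : ℝ) / 2) = Real.sqrt (I v) from (Real.sqrt_eq_rpow _).symm,
        ← Real.sqrt_mul hIv.le, mul_div_cancel₀ _ (ne_of_gt hIv),
        Real.sqrt_mul (by norm_num : (0:ℝ) ≤ 16),
        show Real.sqrt 16 = 4 by
          rw [show (16 : ℝ) = 4 ^ 2 by norm_num, Real.sqrt_sq (by norm_num : (0:ℝ) ≤ 4)]]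
    have hpow : 0 < I v ^ ((1 : ℝ) / 2) := Real.rpow_pos_of_pos hIv _
    have h := hineq v hv
    have h2 : (3 : ℝ) / 2 * I v ^ ((1 : ℝ) / 2) * (c * Real.sqrt (16 * π / I v))
        < (3 : ℝ) / 2 * I v ^ ((1 : ℝ) / 2) * I' v := by
      apply mul_lt_mul_of_pos_left h (by positivity)
    have h3 : (3 : ℝ) / 2 * I v ^ ((1 : ℝ) / 2) * (c * Real.sqrt (16 * π / I v))
        = 6 * c * Real.sqrt π := by
      have : I v ^ ((1 : ℝ) / 2) * Real.sqrt (16 * π / I v) = 4 * Real.sqrt π := key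
      nlinarith [this]
    simp only [hF']
    linarith [h3 ▸ h2]
  have hFc : ContinuousOn F (Set.Ioi 0) := by
    apply ContinuousOn.sub
    · exact hcont.rpow_const (fun x hx => Or.inr (by norm_num))
    · exact (continuous_const.mul continuous_id).continuousOn
  have hFsmall : ∀ᶠ v in nhdsWithin 0 (Set.Ioi 0), 0 < F v := by
    filter_upwards [hsmall, self_mem_nhdsWithin] with v hv hv0
    have hv0' : (0 : ℝ) < v := hv0
    have hg0 : 0 ≤ c ^ ((2 : ℝ) / 3) * (36 * π) ^ ((1 : ℝ) / 3) * v ^ ((2 : ℝ) / 3) := by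
      positivity
    have := Real.rpow_lt_rpow hg0 hv (by norm_num : (0:ℝ) < 3 / 2)
    rw [key_eq c hc0.le v hv0'.le] at this
    simp only [hF]
    linarith
  have hF0 := pos_of_left_deriv F F' hFc hFd hF'pos hFsmall
  intro v hv
  have h := hF0 v hv
  have hIv := hpos v hv
  have h1 : 6 * c * Real.sqrt π * v ≤ I v ^ ((3 : ℝ) / 2) := by
    simp only [hF] at h; linarith
  have h2 := Real.rpow_le_rpow (by positivity) h1 (by norm_num : (0:ℝ) ≤ 2 / 3)
  rw [← Real.rpow_mul hIv.le] at h2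
  norm_num at h2
  calc c ^ ((2 : ℝ) / 3) * (36 * π) ^ ((1 : ℝ) / 3) * v ^ ((2 : ℝ) / 3)
      = ((c ^ ((2 : ℝ) / 3) * (36 * π) ^ ((1 : ℝ) / 3) * v ^ ((2 : ℝ) / 3))
          ^ ((3 : ℝ) / 2)) ^ ((2 : ℝ) / 3) := by
        rw [← Real.rpow_mul (by positivity)]
        norm_num
    _ = (6 * c * Real.sqrt π * v) ^ ((2 : ℝ) / 3) := by rw [key_eq c hc0.le v hv.le]
    _ ≤ I v := h2
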